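/- Let X have the Fréchet distribution with parameters α > 0, μ ∈ ℝ, σ > 0. Then p_eR(X) = 1 − exp(−[4·(log(4/3))^{−1/α} − 3·(log 4)^{−1/α}]^{−α}). -/

import Mathlib

open MeasureTheory Real

variable {Ω : Type*} [MeasurableSpace Ω]

/-- Generalized inverse of the c.d.f.: `F⁻(p) = inf {x : F(x) ≥ p}`. -/
noncomputable def quantile (μ : Measure Ω) (X : Ω → ℝ) (p : ℝ) : ℝ :=
  sInf {x : ℝ | p ≤ (μ {ω | X ω ≤ x}).toReal}

noncomputable def Q1 (μ : Measure Ω) (X : Ω → ℝ) : ℝ := quantile μ X (1/4)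

noncomputable def Q3 (μ : Measure Ω) (X : Ω → ℝ) : ℝ := quantile μ X (3/4)

noncomputable def IQR (μ : Measure Ω) (X : Ω → ℝ) : ℝ := Q3 μ X - Q1 μ X

/-- Probability of a left extreme outlier. -/
noncomputable def peL (μ : Measure Ω) (X : Ω → ℝ) : ℝ :=
  (μ {ω | X ω < Q1 μ X - 3 * IQR μ X}).toReal

/-- Probability of a right extreme outlier. -/
noncomputable def peR (μ : Measure Ω) (X : Ω → ℝ) : ℝ :=
  (μ {ω | Q3 μ X + 3 * IQR μ X < X ω}).toReal

noncomputable def pe2 (μ : Measure Ω) (X : Ω → ℝ) : ℝ := peL μ X + peR μ X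

lemma rpow_inv_cancel {α L : ℝ} (ha : 0 < α) (hL : 0 < L) :
    (L ^ (-1/α)) ^ (-α) = L := by
  rw [← Real.rpow_mul hL.le, show (-1/α)*(-α) = 1 by field_simp, Real.rpow_one]

lemma frechet_quantile (μ : Measure Ω) (X : Ω → ℝ) (α m σ : ℝ)
    (ha : 0 < α) (hs : 0 < σ)
    (hcdf : ∀ x : ℝ, m < x →
      (μ {ω | X ω ≤ x}).toReal = Real.exp (-((x - m) / σ) ^ (-α)))
    (hlow : ∀ x : ℝ, x ≤ m → μ {ω | X ω ≤ x} = 0)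
    (p : ℝ) (hp0 : 0 < p) (hp1 : p < 1) :
    quantile μ X p = m + σ * (-Real.log p) ^ (-1/α) := by
  have hL : 0 < -Real.log p := by
    have := Real.log_neg hp0 hp1; linarith
  set L := -Real.log p with hLdef
  set xp := m + σ * L ^ (-1/α) with hxp
  have hLp : 0 < L ^ (-1/α) := Real.rpow_pos_of_pos hL _
  have hxpm : m < xp := by
    have : 0 < σ * L ^ (-1/α) := mul_pos hs hLp
    rw [hxp]; linarith
  have hFxp : (μ {ω | X ω ≤ xp}).toReal = p := by
    rw [hcdf xp hxpm]
    have h1 : (xp - m) / σ = L ^ (-1/α) := by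
      rw [hxp]; field_simp; ring
    rw [h1, rpow_inv_cancel ha hL, hLdef, neg_neg, Real.exp_log hp0]
  have hmem : xp ∈ {x : ℝ | p ≤ (μ {ω | X ω ≤ x}).toReal} := by
    simp only [Set.mem_setOf_eq, hFxp]; exact le_refl p
  apply le_antisymm
  · apply csInf_le _ hmem
    refine ⟨m, fun x hx => ?_⟩
    by_contra hxm
    push_neg at hxm
    have h0 := hlow x hxm.le
    simp only [Set.mem_setOf_eq, h0, ENNReal.toReal_zero] at hx
    linarith
  · apply le_csInf ⟨xp, hmem⟩
    intro x hx
    by_contra hlt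
    push_neg at hlt
    simp only [Set.mem_setOf_eq] at hx
    rcases le_or_gt x m with hxm | hxm
    · rw [hlow x hxm] at hx; simp at hx; linarith
    · rw [hcdf x hxm] at hx
      have h2 : (x - m)/σ < L ^ (-1/α) := by
        rw [div_lt_iff₀ hs, mul_comm]
        rw [hxp] at hlt; linarith
      have h3 : 0 < (x - m)/σ := div_pos (by linarith) hs
      have h4 : L < ((x-m)/σ) ^ (-α) := by
        have h5 := Real.rpow_lt_rpow_of_neg h3 h2 (neg_lt_zero.mpr ha)
        rwa [rpow_inv_cancel ha hL] at h5
      have h6 : Real.exp (-((x - m) / σ) ^ (-α)) < Real.exp (-L) :=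
        Real.exp_lt_exp.mpr (by linarith)
      rw [hLdef, neg_neg, Real.exp_log hp0] at h6
      linarith

theorem frechet_peR (μ : Measure Ω) [IsProbabilityMeasure μ]
    (X : Ω → ℝ) (hX : Measurable X) (α m σ : ℝ) (ha : 0 < α) (hs : 0 < σ)
    (hcdf : ∀ x : ℝ, m < x →
      (μ {ω | X ω ≤ x}).toReal = Real.exp (-((x - m) / σ) ^ (-α)))
    (hlow : ∀ x : ℝ, x ≤ m → μ {ω | X ω ≤ x} = 0) :
    peR μ X = 1 - Real.exp
      (-(4 * (Real.log (4/3)) ^ (-1/α) - 3 * (Real.log 4) ^ (-1/α)) ^ (-α)) := by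
  set a : ℝ := (Real.log (4/3)) ^ (-1/α) with hadef
  set b : ℝ := (Real.log 4) ^ (-1/α) with hbdef
  have hl43 : (0:ℝ) < Real.log (4/3) := Real.log_pos (by norm_num)
  have hl4 : (0:ℝ) < Real.log 4 := Real.log_pos (by norm_num)
  have hQ3 : Q3 μ X = m + σ * a := by
    rw [Q3, frechet_quantile μ X α m σ ha hs hcdf hlow (3/4) (by norm_num) (by norm_num)]
    congr 2
    rw [← Real.log_inv]
    norm_num
    exact hadef.symm
  have hQ1 : Q1 μ X = m + σ * b := by
    rw [Q1, frechet_quantile μ X α m σ ha hs hcdf hlow (1/4) (by norm_num) (by norm_num)]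
    congr 2
    rw [← Real.log_inv]
    norm_num
    exact hbdef.symm
  have hba : b < a := by
    have h1 : Real.log (4/3) < Real.log 4 := Real.log_lt_log (by norm_num) (by norm_num)
    have hneg : -1/α < 0 := by
      rw [neg_div]
      linarith [div_pos one_pos ha]
    exact Real.rpow_lt_rpow_of_neg hl43 h1 hneg
  have hb0 : 0 < b := Real.rpow_pos_of_pos hl4 _
  set t : ℝ := 4 * a - 3 * b with htdef
  have ht : 0 < t := by rw [htdef]; linarith
  have hc : Q3 μ X + 3 * IQR μ X = m + σ * t := by
    rw [IQR, hQ3, hQ1, htdef]; ring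
  have hcm : m < m + σ * t := by nlinarith
  have hFc : (μ {ω | X ω ≤ m + σ * t}).toReal = Real.exp (-t ^ (-α)) := by
    rw [hcdf _ hcm]
    congr 3
    field_simp
    ring
  have hset : {ω | Q3 μ X + 3 * IQR μ X < X ω} = {ω | X ω ≤ m + σ * t}ᶜ := by
    ext ω; simp [hc, not_le]
  have hms : MeasurableSet {ω | X ω ≤ m + σ * t} := hX measurableSet_Iic
  rw [peR, hset, measure_compl hms (measure_ne_top μ _),
    ENNReal.toReal_sub_of_le (measure_mono (Set.subset_univ _)) (measure_ne_top μ _),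
    measure_univ, ENNReal.toReal_one, hFc]
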